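/- Fix t > 0 and set cₙ = e^{t(n+1)²/2} for n ≥ 0. In ℓ²(ℕ,ℂ) with standard orthonormal basis (eₙ), let e₊(ψ) = Σₙ (n+1)·ψₙ/cₙ and e₋(ψ) = Σₙ (−1)ⁿ(n+1)·ψₙ/cₙ. Then the closed linear span of the vectors {cₙ·eₙ − (n+1)·c₀·e₀ : n ≥ 1} equals ker e₊, and the closed linear span of the vectors {cₙ·eₙ + (−1)ⁿ·((n+1)/2)·c₁·e₁ : n ≥ 0, n ≠ 1} equals ker e₋. -/

import Mathlib

open scoped ENNReal

noncomputable section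

/-- The quantum Hilbert space `ℓ²(ℕ,ℂ)` of `SU(2)` lattice gauge theory. -/
abbrev QH : Type := lp (fun _ : ℕ => ℂ) 2

private lemma Ksummable' {t : ℝ} (ht : 0 < t) {c : ℕ → ℝ}
    (hc : ∀ n : ℕ, c n = Real.exp (t * ((n : ℝ) + 1) ^ 2 / 2)) :
    Summable (fun k : ℕ => ((k : ℝ) + 1) ^ 2 / (c k) ^ 2) := by
  have hr : ‖Real.exp (-t)‖ < 1 := by
    rw [Real.norm_eq_abs, abs_of_pos (Real.exp_pos _)]
    exact Real.exp_lt_one_iff.2 (by linarith)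
  have h1 : Summable (fun n : ℕ => (n : ℝ) ^ 2 * Real.exp (-t) ^ n) :=
    summable_pow_mul_geometric_of_norm_lt_one 2 hr
  have h2 : Summable (fun k : ℕ => ((k : ℝ) + 1) ^ 2 * Real.exp (-t) ^ (k + 1)) := by
    have h := h1.comp_injective Nat.succ_injective
    apply h.congr
    intro k
    simp [Function.comp, Nat.succ_eq_add_one]
  refine h2.of_nonneg_of_le (fun k => by positivity) (fun k => ?_)
  have hck : (c k) ^ 2 = Real.exp (t * ((k : ℝ) + 1) ^ 2) := by
    rw [hc k, ← Real.exp_nat_mul]; ring_nf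
  have hexp : Real.exp (-(t * ((k : ℝ) + 1) ^ 2)) ≤ Real.exp (-t) ^ (k + 1) := by
    rw [← Real.exp_nat_mul, Real.exp_le_exp]
    push_cast
    have hk : (0:ℝ) ≤ (k : ℝ) := Nat.cast_nonneg k
    nlinarith [sq_nonneg ((k : ℝ))]
  rw [hck, div_eq_mul_inv, ← Real.exp_neg]
  exact mul_le_mul_of_nonneg_left hexp (by positivity)

private lemma Kpos' {t : ℝ} (ht : 0 < t) {c : ℕ → ℝ}
    (hc : ∀ n : ℕ, c n = Real.exp (t * ((n : ℝ) + 1) ^ 2 / 2)) :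
    0 < ∑' k : ℕ, ((k : ℝ) + 1) ^ 2 / (c k) ^ 2 := by
  have hcpos : 0 < c 0 := by rw [hc 0]; exact Real.exp_pos _
  refine Summable.tsum_pos (Ksummable' ht hc) (fun k => by
    have : 0 < c k := by rw [hc k]; exact Real.exp_pos _
    positivity) 0 (by positivity)

/-- The key vanishing lemma. -/
private lemma key' {t : ℝ} (ht : 0 < t) {c : ℕ → ℝ}
    (hc : ∀ n : ℕ, c n = Real.exp (t * ((n : ℝ) + 1) ^ 2 / 2))
    (σ : ℕ → ℂ) (hσ : ∀ k, σ k * σ k = 1) (a : ℂ) (z : QH)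
    (hz : ∀ k : ℕ, (z : ∀ _ : ℕ, ℂ) k = σ k * ((((k : ℝ) + 1 : ℝ)) : ℂ) * a / (c k : ℂ))
    (h0 : ∑' k : ℕ, σ k * ((((k : ℝ) + 1 : ℝ)) : ℂ) * z k / (c k : ℂ) = 0) :
    a = 0 := by
  have hcne : ∀ n, (c n : ℂ) ≠ 0 := fun n => by
    simp only [ne_eq, Complex.ofReal_eq_zero]
    rw [hc n]; exact (Real.exp_pos _).ne'
  have hterm : ∀ k : ℕ, σ k * ((((k : ℝ) + 1 : ℝ)) : ℂ) * z k / (c k : ℂ)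
      = (((((k : ℝ) + 1) ^ 2 / (c k) ^ 2 : ℝ)) : ℂ) * a := by
    intro k
    rw [hz k]
    have hσ2 : σ k ^ 2 = 1 := by rw [sq]; exact hσ k
    push_cast
    field_simp
    ring_nf
    rw [hσ2]
    ring
  rw [tsum_congr hterm, tsum_mul_right, ← Complex.ofReal_tsum] at h0
  have hK : (0:ℝ) < ∑' k : ℕ, ((k : ℝ) + 1) ^ 2 / (c k) ^ 2 := Kpos' ht hc
  have hKne : ((∑' k : ℕ, ((k : ℝ) + 1) ^ 2 / (c k) ^ 2 : ℝ) : ℂ) ≠ 0 := by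
    simp only [ne_eq, Complex.ofReal_eq_zero]
    exact hK.ne'
  exact (mul_eq_zero.1 h0).resolve_left hKne

/-- Abstract reduction: closed span equals kernel. -/
private lemma half' (φ : QH →L[ℂ] ℂ) (S : Set QH)
    (hS : ∀ v ∈ S, φ v = 0)
    (hker : ∀ z : QH, φ z = 0 → (∀ v ∈ S, inner (𝕜 := ℂ) v z = 0) → z = 0) :
    (Submodule.span ℂ S).topologicalClosure = LinearMap.ker (φ : QH →ₗ[ℂ] ℂ) := by
  have hle : (Submodule.span ℂ S).topologicalClosure ≤ LinearMap.ker (φ : QH →ₗ[ℂ] ℂ) :=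
    Submodule.topologicalClosure_minimal _ (Submodule.span_le.2 hS)
      (ContinuousLinearMap.isClosed_ker φ)
  refine le_antisymm hle ?_
  set V := (Submodule.span ℂ S).topologicalClosure with hV
  haveI : CompleteSpace V := (Submodule.span ℂ S).isClosed_topologicalClosure.completeSpace_coe
  intro ψ hψ
  obtain ⟨y, hy, z, hz, rfl⟩ := V.exists_add_mem_mem_orthogonal ψ
  have hφz : φ z = 0 := by
    have h1 : φ (y + z) = 0 := hψ
    have hy0 : φ y = 0 := hle hy
    simpa [map_add, hy0] using h1
  have hz0 : z = 0 := by
    refine hker z hφz fun v hv => ?_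
    exact (Submodule.mem_orthogonal V z).1 hz v
      (Submodule.le_topologicalClosure _ (Submodule.subset_span hv))
  simpa [hz0] using hy

/-- With `cₙ = e^{t(n+1)²/2}` and the evaluation functionals
`e₊(ψ) = Σₙ(n+1)ψₙ/cₙ`, `e₋(ψ) = Σₙ(−1)ⁿ(n+1)ψₙ/cₙ`, the closed span of
`{cₙeₙ − (n+1)c₀e₀ : n ≥ 1}` is `ker e₊` and the closed span of
`{cₙeₙ + (−1)ⁿ((n+1)/2)c₁e₁ : n ≠ 1}` is `ker e₋`. -/
theorem basis_of_vanishing_subspaces (t : ℝ) (ht : 0 < t)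
    (c : ℕ → ℝ) (hc : ∀ n : ℕ, c n = Real.exp (t * ((n : ℝ) + 1) ^ 2 / 2))
    (ep em : QH →L[ℂ] ℂ)
    (hep : ∀ ψ : QH, ep ψ = ∑' n : ℕ, (((n : ℝ) + 1 : ℝ) : ℂ) * ψ n / (c n : ℂ))
    (hem : ∀ ψ : QH, em ψ =
      ∑' n : ℕ, (-1 : ℂ) ^ n * ((((n : ℝ) + 1 : ℝ) : ℂ) * ψ n / (c n : ℂ))) :
    (Submodule.span ℂ
        {v : QH | ∃ n : ℕ, 1 ≤ n ∧
          v = (c n : ℂ) • lp.single 2 n 1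
                - ((((n : ℝ) + 1) * c 0 : ℝ) : ℂ) • lp.single 2 0 1}).topologicalClosure
      = LinearMap.ker (ep : QH →ₗ[ℂ] ℂ) ∧
    (Submodule.span ℂ
        {v : QH | ∃ n : ℕ, n ≠ 1 ∧
          v = (c n : ℂ) • lp.single 2 n 1
                + (-1 : ℂ) ^ n • (((((n : ℝ) + 1) / 2) * c 1 : ℝ) : ℂ) •
                    lp.single 2 1 1}).topologicalClosure
      = LinearMap.ker (em : QH →ₗ[ℂ] ℂ) := by
  have hcne : ∀ n, (c n : ℂ) ≠ 0 := fun n => by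
    simp only [ne_eq, Complex.ofReal_eq_zero]
    rw [hc n]; exact (Real.exp_pos _).ne'
  -- value of the functionals on basis vectors
  have hsingle : ∀ m : ℕ, ∀ ψ : QH, (∀ k ≠ m, (ψ : ∀ _ : ℕ, ℂ) k = 0) →
      (∑' n : ℕ, (((n : ℝ) + 1 : ℝ) : ℂ) * ψ n / (c n : ℂ)
        = (((m : ℝ) + 1 : ℝ) : ℂ) * ψ m / (c m : ℂ)) := by
    intro m ψ hψ
    refine tsum_eq_single m fun k hk => ?_
    rw [hψ k hk]
    simp
  have hsingle_em : ∀ m : ℕ, ∀ ψ : QH, (∀ k ≠ m, (ψ : ∀ _ : ℕ, ℂ) k = 0) →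
      (∑' n : ℕ, (-1:ℂ)^n * ((((n : ℝ) + 1 : ℝ) : ℂ) * ψ n / (c n : ℂ))
        = (-1:ℂ)^m * ((((m : ℝ) + 1 : ℝ) : ℂ) * ψ m / (c m : ℂ))) := by
    intro m ψ hψ
    refine tsum_eq_single m fun k hk => ?_
    rw [hψ k hk]
    simp
  have hep_single : ∀ m : ℕ, ep (lp.single 2 m 1) = (((m : ℝ) + 1 : ℝ) : ℂ) / (c m : ℂ) := by
    intro m
    rw [hep]
    rw [hsingle m (lp.single 2 m 1) (fun k hk => lp.single_apply_ne 2 m 1 hk)]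
    rw [lp.single_apply_self]
    ring
  have hem_single : ∀ m : ℕ,
      em (lp.single 2 m 1) = (-1:ℂ)^m * ((((m : ℝ) + 1 : ℝ) : ℂ) / (c m : ℂ)) := by
    intro m
    rw [hem]
    rw [hsingle_em m (lp.single 2 m 1) (fun k hk => lp.single_apply_ne 2 m 1 hk)]
    rw [lp.single_apply_self]
    ring
  constructor
  · apply half'
    · rintro v ⟨n, hn, rfl⟩
      rw [map_sub, map_smul, map_smul, hep_single, hep_single]
      simp only [smul_eq_mul]
      push_cast
      field_simp [hcne n, hcne 0]; ring
    · intro z hz0 horth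
      have hrel : ∀ n : ℕ, 1 ≤ n →
          (c n : ℂ) * z n = ((((n : ℝ) + 1) * c 0 : ℝ) : ℂ) * z 0 := by
        intro n hn
        have h := horth _ ⟨n, hn, rfl⟩
        rw [inner_sub_left, inner_smul_left, inner_smul_left,
          lp.inner_single_left, lp.inner_single_left] at h
        simp only [RCLike.inner_apply, map_one, one_mul, Complex.conj_ofReal] at h
        linear_combination h
      set a : ℂ := (c 0 : ℂ) * z 0 with ha
      have hz : ∀ k : ℕ, (z : ∀ _ : ℕ, ℂ) k
          = (1:ℂ) * ((((k : ℝ) + 1 : ℝ)) : ℂ) * a / (c k : ℂ) := by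
        intro k
        rcases Nat.eq_zero_or_pos k with hk | hk
        · subst hk
          rw [ha, one_mul, eq_div_iff (hcne 0)]
          push_cast
          ring
        · have h := hrel k hk
          push_cast at h
          rw [ha, one_mul, eq_div_iff (hcne k)]
          push_cast
          linear_combination h
      have h0 : ∑' k : ℕ, (1:ℂ) * ((((k : ℝ) + 1 : ℝ)) : ℂ) * z k / (c k : ℂ) = 0 := by
        rw [tsum_congr (fun k => by rw [one_mul])]
        rw [← hep z]; exact hz0
      have ha0 : a = 0 := key' ht hc (fun _ => 1) (fun _ => by ring) a z hz h0
      have hz00 : (z : ∀ _ : ℕ, ℂ) 0 = 0 := by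
        have := mul_eq_zero.1 (ha ▸ ha0)
        exact this.resolve_left (hcne 0)
      ext k
      rw [hz k, ha, hz00]
      simp
  · apply half'
    · rintro v ⟨n, hn, rfl⟩
      rw [map_add, map_smul, map_smul, map_smul, hem_single, hem_single]
      simp only [smul_eq_mul]
      push_cast
      field_simp [hcne n, hcne 1]; ring
    · intro z hz0 horth
      have hrel : ∀ n : ℕ, n ≠ 1 →
          (c n : ℂ) * z n
            = -((-1:ℂ)^n * (((((n : ℝ) + 1) / 2) * c 1 : ℝ) : ℂ) * z 1) := by
        intro n hn
        have h := horth _ ⟨n, hn, rfl⟩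
        rw [inner_add_left, inner_smul_left, inner_smul_left, inner_smul_left,
          lp.inner_single_left, lp.inner_single_left] at h
        simp only [RCLike.inner_apply, map_one, one_mul, Complex.conj_ofReal, map_pow,
          map_neg, map_one] at h
        linear_combination h
      set a : ℂ := -((c 1 : ℂ) / 2) * z 1 with ha
      have hσ : ∀ k : ℕ, ((-1:ℂ)^k) * ((-1:ℂ)^k) = 1 := by
        intro k
        rw [← pow_add, ← two_mul, pow_mul]
        norm_num
      have hz : ∀ k : ℕ, (z : ∀ _ : ℕ, ℂ) k
          = (-1:ℂ)^k * ((((k : ℝ) + 1 : ℝ)) : ℂ) * a / (c k : ℂ) := by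
        intro k
        rcases eq_or_ne k 1 with hk | hk
        · subst hk
          rw [ha, eq_div_iff (hcne 1)]
          push_cast
          ring
        · have h := hrel k hk
          push_cast at h
          rw [ha, eq_div_iff (hcne k)]
          push_cast
          linear_combination h
      have h0 : ∑' k : ℕ, (-1:ℂ)^k * ((((k : ℝ) + 1 : ℝ)) : ℂ) * z k / (c k : ℂ) = 0 := by
        rw [tsum_congr (fun k => by ring_nf :
          ∀ k : ℕ, (-1:ℂ)^k * ((((k : ℝ) + 1 : ℝ)) : ℂ) * z k / (c k : ℂ)
            = (-1:ℂ)^k * (((((k : ℝ) + 1 : ℝ)) : ℂ) * z k / (c k : ℂ)))]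
        rw [← hem z]; exact hz0
      have ha0 : a = 0 := key' ht hc (fun k => (-1:ℂ)^k) hσ a z hz h0
      have hz10 : (z : ∀ _ : ℕ, ℂ) 1 = 0 := by
        have h := ha ▸ ha0
        have h2 : (c 1 : ℂ) / 2 ≠ 0 := by
          apply div_ne_zero (hcne 1)
          norm_num
        rcases mul_eq_zero.1 h with h' | h'
        · exact absurd (neg_eq_zero.1 h') h2
        · exact h'
      ext k
      rw [hz k, ha, hz10]
      simp

end
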